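/- If φ = (φ_1,…,φ_J) and ψ = (ψ_1,…,ψ_J) are both minimizers of the dual Schrödinger objective F over tuples of bounded measurable potentials, then there exist real constants λ_1,…,λ_J with λ_1 + ⋯ + λ_J = 0 such that ψ_j = φ_j + λ_j holds μ_j-almost everywhere for every j. Consequently F has at most one minimizer (up to μ_j-null sets) satisfying the normalization ∫_{X_j} φ_j dμ_j = 0 for j = 1,…,J−1. -/

import Mathlib

open MeasureTheory Function

lemma aux_integrable {α : Type*} [MeasurableSpace α] (μ : Measure α) [IsFiniteMeasure μ]
    {f : α → ℝ} (hf : Measurable f) {C : ℝ} (h : ∀ x, |f x| ≤ C) : Integrable f μ :=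
  (integrable_const C).mono' hf.aestronglyMeasurable
    (Filter.Eventually.of_forall fun x => by simpa [Real.norm_eq_abs] using h x)

lemma aux_exp_midpoint_le (a b : ℝ) :
    Real.exp ((a + b) / 2) ≤ (Real.exp a + Real.exp b) / 2 := by
  have e1 : Real.exp a = Real.exp (a/2) * Real.exp (a/2) := by rw [← Real.exp_add]; ring_nf
  have e2 : Real.exp b = Real.exp (b/2) * Real.exp (b/2) := by rw [← Real.exp_add]; ring_nf
  have e3 : Real.exp ((a+b)/2) = Real.exp (a/2) * Real.exp (b/2) := by
    rw [← Real.exp_add]; ring_nf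
  nlinarith [sq_nonneg (Real.exp (a/2) - Real.exp (b/2))]

lemma aux_exp_midpoint_eq (a b : ℝ)
    (h : (Real.exp a + Real.exp b) / 2 - Real.exp ((a + b) / 2) = 0) : a = b := by
  have e1 : Real.exp a = Real.exp (a/2) * Real.exp (a/2) := by rw [← Real.exp_add]; ring_nf
  have e2 : Real.exp b = Real.exp (b/2) * Real.exp (b/2) := by rw [← Real.exp_add]; ring_nf
  have e3 : Real.exp ((a+b)/2) = Real.exp (a/2) * Real.exp (b/2) := by
    rw [← Real.exp_add]; ring_nf
  have h2 : (Real.exp (a/2) - Real.exp (b/2))^2 = 0 := by nlinarith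
  have h3 : Real.exp (a/2) = Real.exp (b/2) := by
    have := pow_eq_zero_iff (n := 2) (by norm_num) |>.mp h2
    linarith [sub_eq_zero.mp this]
  have := Real.exp_eq_exp.mp h3
  linarith

lemma aux_map_eval_pi {ι : Type*} [Fintype ι] [DecidableEq ι] {α : ι → Type*}
    [∀ i, MeasurableSpace (α i)] (μ : ∀ i, Measure (α i)) [∀ i, IsProbabilityMeasure (μ i)]
    (i : ι) : (Measure.pi μ).map (Function.eval i) = μ i := by
  ext s hs
  rw [Measure.map_apply (measurable_pi_apply i) hs, Set.eval_preimage, Measure.pi_pi]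
  rw [Fintype.prod_eq_single i (fun j hj => by
    rw [Function.update_of_ne hj]; exact measure_univ)]
  rw [Function.update_self]

lemma aux_integral_eval_pi {ι : Type*} [Fintype ι] {α : ι → Type*}
    [∀ i, MeasurableSpace (α i)] (μ : ∀ i, Measure (α i)) [∀ i, IsProbabilityMeasure (μ i)]
    (i : ι) {g : α i → ℝ} (hg : Measurable g) :
    ∫ x, g (x i) ∂Measure.pi μ = ∫ y, g y ∂μ i := by
  classical
  have h := integral_map (μ := Measure.pi μ) (φ := Function.eval i) (f := g)
      (measurable_pi_apply i).aemeasurable ?_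
  · rw [aux_map_eval_pi] at h; exact h.symm
  · rw [aux_map_eval_pi]; exact hg.aestronglyMeasurable

lemma aux_sum_ae_zero {ι : Type*} [Fintype ι] [DecidableEq ι] {α : ι → Type*}
    [∀ i, MeasurableSpace (α i)] (μ : ∀ i, Measure (α i)) [∀ i, IsProbabilityMeasure (μ i)]
    (g : ∀ i, α i → ℝ) (hgm : ∀ i, Measurable (g i)) (M : ι → ℝ) (hgb : ∀ i x, |g i x| ≤ M i)
    (h0 : (fun x => ∑ i, g i (x i)) =ᵐ[Measure.pi μ] 0) :
    (∑ i, ∫ y, g i y ∂μ i) = 0 ∧ ∀ i, g i =ᵐ[μ i] fun _ => ∫ y, g i y ∂μ i := by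
  have hne : ∀ i, Nonempty (α i) := by
    intro i
    by_contra h
    rw [not_nonempty_iff] at h
    have h1 : (μ i) Set.univ = 1 := measure_univ
    rw [Set.univ_eq_empty_iff.mpr h, measure_empty] at h1
    exact zero_ne_one h1
  set S : ι → ℝ := fun i => ∫ y, g i y ∂μ i with hS
  have hgmc : ∀ i, Measurable fun x : ∀ k, α k => g i (x i) :=
    fun i => (hgm i).comp (measurable_pi_apply i)
  have hDm : Measurable fun x : ∀ k, α k => ∑ i, g i (x i) :=
    Finset.measurable_sum _ fun i _ => hgmc i
  have hSsum : (∑ i, S i) = 0 := by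
    have h1 : ∫ x, (∑ i, g i (x i)) ∂Measure.pi μ = 0 := by
      rw [integral_congr_ae h0]; simp
    rw [integral_finset_sum _ (fun i _ =>
      aux_integrable _ (hgmc i) (fun x => hgb i (x i)))] at h1
    simp_rw [aux_integral_eval_pi μ _ (hgm _)] at h1
    exact h1
  refine ⟨hSsum, fun j => ?_⟩
  classical
  set x0 : ∀ i, α i := fun i => Classical.arbitrary (α i) with hx0
  set f : (∀ i, α i) → ENNReal := fun w => (‖∑ i, g i (w i)‖₊ : ENNReal) with hf
  have hfm : Measurable f := hDm.nnnorm.coe_nnreal_ennreal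
  have hf0 : ∫⁻ w, f w ∂Measure.pi μ = 0 := by
    have hae : f =ᵐ[Measure.pi μ] (fun _ => 0) := h0.mono fun x hx => by
      have hx' : (∑ i, g i (x i)) = 0 := hx
      simp [hf, hx']
    rw [lintegral_congr_ae hae, lintegral_zero]
  set s : Finset ι := Finset.univ.erase j with hs
  set G : (∀ i, α i) → ENNReal := lmarginal μ s f with hG
  have hGm : Measurable G := hfm.lmarginal μ
  have h1 : ∫⁻ y, G (update x0 j y) ∂μ j = 0 := by
    rw [hG, hs, ← lmarginal_erase f hfm (Finset.mem_univ j) x0,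
      ← lintegral_eq_lmarginal_univ (μ := μ) x0, hf0]
  have h2 : ∀ᵐ y ∂μ j, G (update x0 j y) = 0 :=
    (lintegral_eq_zero_iff (hGm.comp (measurable_update x0))).mp h1
  filter_upwards [h2] with y hy
  set xj : ∀ i, α i := update x0 j y with hxj
  have hupd : Measurable fun z : ∀ i : s, α i => updateFinset xj s z := by
    rw [measurable_pi_iff]
    intro i
    simp only [updateFinset]
    split_ifs with hi
    · exact measurable_pi_apply _
    · exact measurable_const
  have h3 : ∫⁻ z : ∀ i : s, α i, f (updateFinset xj s z) ∂(Measure.pi fun i : s => μ i) = 0 := hy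
  have h4 : ∀ᵐ z : (∀ i : s, α i) ∂(Measure.pi fun i : s => μ i),
      (∑ i, g i (updateFinset xj s z i)) = 0 := by
    have := (lintegral_eq_zero_iff (hfm.comp hupd)).mp h3
    filter_upwards [this] with z hz
    have hz' : f (updateFinset xj s z) = 0 := hz
    simpa [hf] using hz'
  have hwj : ∀ z : ∀ i : s, α i, updateFinset xj s z j = y := by
    intro z
    have hjs : j ∉ s := Finset.notMem_erase j _
    simp [updateFinset, hjs, hxj]
  have hsum : ∀ z : ∀ i : s, α i,
      (∑ i, g i (updateFinset xj s z i)) = g j y + ∑ i : s, g i (z i) := by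
    intro z
    rw [← Finset.add_sum_erase _ _ (Finset.mem_univ j), hwj z]
    congr 1
    rw [← Finset.sum_coe_sort (Finset.univ.erase j) (fun i => g i (updateFinset xj s z i))]
    apply Finset.sum_congr rfl
    intro k _
    congr 1
    simp [updateFinset, k.2]
  have h5 : ∀ᵐ z : (∀ i : s, α i) ∂(Measure.pi fun i : s => μ i),
      g j y + ∑ i : s, g i (z i) = 0 := by
    filter_upwards [h4] with z hz
    rw [← hsum z]; exact hz
  have h6 : ∫ z : ∀ i : s, α i, (g j y + ∑ i : s, g i (z i))
      ∂(Measure.pi fun i : s => μ i) = 0 := by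
    have hae : (fun z : ∀ i : s, α i => g j y + ∑ i : s, g i (z i))
        =ᵐ[Measure.pi fun i : s => μ i] (fun _ => 0) := h5.mono fun z hz => hz
    rw [integral_congr_ae hae]; simp
  have hIsum : ∀ k : s, Integrable (fun z : ∀ i : s, α i => g k (z k))
      (Measure.pi fun i : s => μ i) :=
    fun k => aux_integrable _ ((hgm k).comp (measurable_pi_apply k)) (fun z => hgb k (z k))
  rw [integral_add (integrable_const _) (integrable_finset_sum _ fun k _ => hIsum k),
    integral_const, integral_finset_sum _ (fun k _ => hIsum k)] at h6
  simp only [measure_univ, probReal_univ, ENNReal.toReal_one, smul_eq_mul, one_mul] at h6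
  have h7 : ∀ k : s, ∫ z : ∀ i : s, α i, g k (z k) ∂(Measure.pi fun i : s => μ i) = S k :=
    fun k => aux_integral_eval_pi (fun i : s => μ i) k (hgm k)
  simp_rw [h7] at h6
  have h8 : (∑ k : s, S k) = ∑ k ∈ Finset.univ.erase j, S k :=
    Finset.sum_coe_sort _ _
  have h9 : (∑ k ∈ Finset.univ.erase j, S k) = -S j := by
    have h10 := Finset.add_sum_erase _ S (Finset.mem_univ j)
    rw [hSsum] at h10
    linarith
  rw [h8, h9] at h6
  show g j y = S j
  linarith

/-- The dual Schrödinger objective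
`F(φ) = -∑_j ∫ φ_j dμ_j + ε ∫ exp((∑_j φ_j(x_j) - c(x))/ε) d⊗μ_j - ε`. -/
noncomputable def dualObj {d J : ℕ}
    (X : Fin J → Set (Fin d → ℝ))
    (μ : (j : Fin J) → Measure (X j)) [∀ j, SigmaFinite (μ j)]
    (c : ((j : Fin J) → X j) → ℝ) (ε : ℝ)
    (φ : (j : Fin J) → X j → ℝ) : ℝ :=
  -(∑ j, ∫ x, φ j x ∂(μ j)) +
    ε * ∫ x, Real.exp (((∑ j, φ j (x j)) - c x) / ε) ∂(Measure.pi μ) - ε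

/-- A tuple of potentials is admissible if each component is bounded and measurable. -/
def BddMeasTuple {d J : ℕ} (X : Fin J → Set (Fin d → ℝ))
    (φ : (j : Fin J) → X j → ℝ) : Prop :=
  (∀ j, Measurable (φ j)) ∧ ∀ j, ∃ M, ∀ x, |φ j x| ≤ M

set_option maxHeartbeats 1000000 in
/-- Any two minimizers of the dual Schrödinger objective over
bounded measurable potentials differ by constants `lam j` summing to zero,
`μ j`-almost everywhere; consequently, under the normalization
`∫ φ_j dμ_j = 0` for `j = 1,…,J-1`, the minimizer is unique up to `μ j`-null sets. -/
theorem dualObj_minimizers_unique_up_to_translation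
    {d J : ℕ} (hJ : 2 ≤ J)
    (X : Fin J → Set (Fin d → ℝ)) (hX : ∀ j, IsCompact (X j))
    (μ : (j : Fin J) → Measure (X j)) [∀ j, IsProbabilityMeasure (μ j)]
    (c : ((j : Fin J) → X j) → ℝ)
    (hc_cont : Continuous c) (hc_bdd : ∃ M, ∀ x, |c x| ≤ M)
    (ε : ℝ) (hε : 0 < ε)
    (φ ψ : (j : Fin J) → X j → ℝ)
    (hφ : BddMeasTuple X φ) (hψ : BddMeasTuple X ψ)
    (hφmin : ∀ χ, BddMeasTuple X χ → dualObj X μ c ε φ ≤ dualObj X μ c ε χ)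
    (hψmin : ∀ χ, BddMeasTuple X χ → dualObj X μ c ε ψ ≤ dualObj X μ c ε χ) :
    (∃ lam : Fin J → ℝ, (∑ j, lam j) = 0 ∧
        ∀ j, ψ j =ᵐ[μ j] fun x => φ j x + lam j) ∧
    ((∀ j : Fin J, (j : ℕ) < J - 1 → ∫ x, φ j x ∂(μ j) = 0) →
      (∀ j : Fin J, (j : ℕ) < J - 1 → ∫ x, ψ j x ∂(μ j) = 0) →
      ∀ j, ψ j =ᵐ[μ j] φ j) := by
  classical
  obtain ⟨Mc, hMc⟩ := hc_bdd
  obtain ⟨hφm, hφb⟩ := hφ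
  obtain ⟨hψm, hψb⟩ := hψ
  choose Mφ hMφ using hφb
  choose Mψ hMψ using hψb
  have hc_meas : Measurable c := hc_cont.measurable
  have tri : ∀ a b : ℝ, |a - b| ≤ |a| + |b| := fun a b => by
    rw [sub_eq_add_neg]
    exact (abs_add_le a (-b)).trans (by rw [abs_neg])
  -- measurability of the exponents
  have hsumφ : Measurable fun x : (j : Fin J) → X j => ∑ j, φ j (x j) :=
    Finset.measurable_sum _ fun j _ => (hφm j).comp (measurable_pi_apply j)
  have hsumψ : Measurable fun x : (j : Fin J) → X j => ∑ j, ψ j (x j) :=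
    Finset.measurable_sum _ fun j _ => (hψm j).comp (measurable_pi_apply j)
  have hAm : Measurable fun x : (j : Fin J) → X j => ((∑ j, φ j (x j)) - c x) / ε :=
    (hsumφ.sub hc_meas).div_const _
  have hBm : Measurable fun x : (j : Fin J) → X j => ((∑ j, ψ j (x j)) - c x) / ε :=
    (hsumψ.sub hc_meas).div_const _
  -- bounds on the exponents
  have hAb : ∀ x, |((∑ j, φ j (x j)) - c x) / ε| ≤ ((∑ j, Mφ j) + Mc) / ε := by
    intro x
    rw [abs_div, abs_of_pos hε]
    gcongr
    refine (tri _ _).trans (add_le_add ?_ (hMc x))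
    exact (Finset.abs_sum_le_sum_abs _ _).trans (Finset.sum_le_sum fun j _ => hMφ j _)
  have hBb : ∀ x, |((∑ j, ψ j (x j)) - c x) / ε| ≤ ((∑ j, Mψ j) + Mc) / ε := by
    intro x
    rw [abs_div, abs_of_pos hε]
    gcongr
    refine (tri _ _).trans (add_le_add ?_ (hMc x))
    exact (Finset.abs_sum_le_sum_abs _ _).trans (Finset.sum_le_sum fun j _ => hMψ j _)
  -- integrability facts
  have hIφ : ∀ j, Integrable (φ j) (μ j) := fun j => aux_integrable _ (hφm j) (hMφ j)
  have hIψ : ∀ j, Integrable (ψ j) (μ j) := fun j => aux_integrable _ (hψm j) (hMψ j)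
  have hexp_bound : ∀ (u : ((j : Fin J) → X j) → ℝ) (C : ℝ), (∀ x, |u x| ≤ C) →
      ∀ x, |Real.exp (u x)| ≤ Real.exp C := by
    intro u C hu x
    rw [abs_of_nonneg (Real.exp_nonneg _)]
    exact Real.exp_le_exp.mpr ((abs_le.mp (hu x)).2)
  have hIexpA : Integrable (fun x => Real.exp (((∑ j, φ j (x j)) - c x) / ε)) (Measure.pi μ) :=
    aux_integrable _ (Real.measurable_exp.comp hAm) (hexp_bound _ _ hAb)
  have hIexpB : Integrable (fun x => Real.exp (((∑ j, ψ j (x j)) - c x) / ε)) (Measure.pi μ) :=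
    aux_integrable _ (Real.measurable_exp.comp hBm) (hexp_bound _ _ hBb)
  have hIexpM : Integrable (fun x =>
      Real.exp ((((∑ j, φ j (x j)) - c x) / ε + ((∑ j, ψ j (x j)) - c x) / ε) / 2))
      (Measure.pi μ) := by
    refine aux_integrable _ (Real.measurable_exp.comp ((hAm.add hBm).div_const _))
      (hexp_bound _ ((((∑ j, Mφ j) + Mc) / ε + ((∑ j, Mψ j) + Mc) / ε) / 2) ?_)
    intro x
    rw [abs_div, abs_two]
    have h3 : |((∑ j, φ j (x j)) - c x) / ε + ((∑ j, ψ j (x j)) - c x) / ε| ≤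
        ((∑ j, Mφ j) + Mc) / ε + ((∑ j, Mψ j) + Mc) / ε :=
      (abs_add_le _ _).trans (add_le_add (hAb x) (hBb x))
    linarith
  -- the midpoint tuple
  set χf : (j : Fin J) → X j → ℝ := fun j x => (φ j x + ψ j x) / 2 with hχf
  have hχ : BddMeasTuple X χf := by
    refine ⟨fun j => ((hφm j).add (hψm j)).div_const _, fun j => ⟨(Mφ j + Mψ j) / 2, fun x => ?_⟩⟩
    rw [hχf]
    have h1 : |φ j x + ψ j x| ≤ Mφ j + Mψ j := (abs_add_le _ _).trans (add_le_add (hMφ j x) (hMψ j x))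
    calc |(φ j x + ψ j x) / 2| = |φ j x + ψ j x| / 2 := by rw [abs_div, abs_two]
    _ ≤ (Mφ j + Mψ j) / 2 := by linarith
  -- the values
  have heq : dualObj X μ c ε φ = dualObj X μ c ε ψ :=
    le_antisymm (hφmin ψ ⟨hψm, fun j => ⟨Mψ j, hMψ j⟩⟩) (hψmin φ ⟨hφm, fun j => ⟨Mφ j, hMφ j⟩⟩)
  have hle := hφmin χf hχ
  simp only [dualObj] at heq hle
  set Lφ : ℝ := ∑ j, ∫ x, φ j x ∂μ j with hLφdef
  set Lψ : ℝ := ∑ j, ∫ x, ψ j x ∂μ j with hLψdef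
  set Eφ : ℝ := ∫ x, Real.exp (((∑ j, φ j (x j)) - c x) / ε) ∂Measure.pi μ with hEφdef
  set Eψ : ℝ := ∫ x, Real.exp (((∑ j, ψ j (x j)) - c x) / ε) ∂Measure.pi μ with hEψdef
  set EM : ℝ := ∫ x, Real.exp ((((∑ j, φ j (x j)) - c x) / ε +
      ((∑ j, ψ j (x j)) - c x) / ε) / 2) ∂Measure.pi μ with hEMdef
  -- rewrite the midpoint pieces
  have hLχ : (∑ j, ∫ x, χf j x ∂μ j) = (Lφ + Lψ) / 2 := by
    have h1 : ∀ j ∈ Finset.univ, ∫ x, χf j x ∂μ j =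
        (∫ x, φ j x ∂μ j + ∫ x, ψ j x ∂μ j) / 2 := by
      intro j _
      simp only [hχf]
      rw [integral_div, integral_add (hIφ j) (hIψ j)]
    rw [Finset.sum_congr rfl h1, ← Finset.sum_div, Finset.sum_add_distrib,
      hLφdef, hLψdef]
  have hEχ : ∫ x, Real.exp (((∑ j, χf j (x j)) - c x) / ε) ∂Measure.pi μ = EM := by
    rw [hEMdef]
    refine integral_congr_ae (Filter.Eventually.of_forall fun x => ?_)
    refine congrArg Real.exp ?_
    simp only [hχf]
    rw [← Finset.sum_div, Finset.sum_add_distrib]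
    have harith : ∀ a b cc e : ℝ, e ≠ 0 →
        ((a + b) / 2 - cc) / e = ((a - cc) / e + (b - cc) / e) / 2 := by
      intros a b cc e he
      field_simp
      ring
    exact harith _ _ _ _ hε.ne'
  rw [hLχ, hEχ] at hle
  -- the convexity gap function
  set gap : ((j : Fin J) → X j) → ℝ := fun x =>
    (Real.exp (((∑ j, φ j (x j)) - c x) / ε) + Real.exp (((∑ j, ψ j (x j)) - c x) / ε)) / 2 -
      Real.exp ((((∑ j, φ j (x j)) - c x) / ε + ((∑ j, ψ j (x j)) - c x) / ε) / 2) with hgap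
  have hIgap : Integrable gap (Measure.pi μ) := ((hIexpA.add hIexpB).div_const 2).sub hIexpM
  have hgap_nonneg : ∀ x, 0 ≤ gap x := fun x => by
    simp only [hgap]
    have := aux_exp_midpoint_le (((∑ j, φ j (x j)) - c x) / ε) (((∑ j, ψ j (x j)) - c x) / ε)
    linarith
  have hIhalf : Integrable (fun x => (Real.exp (((∑ j, φ j (x j)) - c x) / ε) +
      Real.exp (((∑ j, ψ j (x j)) - c x) / ε)) / 2) (Measure.pi μ) :=
    (hIexpA.add hIexpB).div_const 2
  have hgap_int : ∫ x, gap x ∂Measure.pi μ = (Eφ + Eψ) / 2 - EM := by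
    simp only [hgap]
    rw [integral_sub hIhalf hIexpM, integral_div, integral_add hIexpA hIexpB,
      hEφdef, hEψdef, hEMdef]
  have hgap_le : ∫ x, gap x ∂Measure.pi μ ≤ 0 := by
    rw [hgap_int]
    nlinarith [hle, heq, hε]
  have hgap_zero : ∫ x, gap x ∂Measure.pi μ = 0 :=
    le_antisymm hgap_le (integral_nonneg hgap_nonneg)
  have hgap_ae : gap =ᵐ[Measure.pi μ] 0 :=
    (integral_eq_zero_iff_of_nonneg hgap_nonneg hIgap).mp hgap_zero
  -- a.e. equality of the exponents, hence of the sums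
  have hD0 : (fun x => ∑ j, (ψ j (x j) - φ j (x j))) =ᵐ[Measure.pi μ] 0 := by
    filter_upwards [hgap_ae] with x hx
    have hx' : gap x = 0 := hx
    simp only [hgap] at hx'
    have hAB : ((∑ j, φ j (x j)) - c x) / ε = ((∑ j, ψ j (x j)) - c x) / ε :=
      aux_exp_midpoint_eq _ _ hx'
    have hsum : (∑ j, φ j (x j)) = ∑ j, ψ j (x j) := by
      field_simp at hAB
      linarith
    show (∑ j, (ψ j (x j) - φ j (x j))) = 0
    rw [Finset.sum_sub_distrib]
    linarith
  -- apply the key lemma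
  obtain ⟨hSsum, hSae⟩ := aux_sum_ae_zero μ (fun j x => ψ j x - φ j x)
    (fun j => (hψm j).sub (hφm j)) (fun j => Mψ j + Mφ j)
    (fun j x => (tri _ _).trans (add_le_add (hMψ j x) (hMφ j x))) hD0
  set lam : Fin J → ℝ := fun j => ∫ y, (ψ j y - φ j y) ∂μ j with hlam
  have hmain : ∀ j, ψ j =ᵐ[μ j] fun x => φ j x + lam j := by
    intro j
    filter_upwards [hSae j] with y hy
    have hy' : ψ j y - φ j y = lam j := hy
    show ψ j y = φ j y + lam j
    linarith
  refine ⟨⟨lam, hSsum, hmain⟩, ?_⟩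
  intro hφn hψn j
  have hlt : ∀ k : Fin J, (k : ℕ) < J - 1 → lam k = 0 := by
    intro k hk
    have h1 : ∫ x, ψ k x ∂μ k = ∫ x, (φ k x + lam k) ∂μ k := integral_congr_ae (hmain k)
    rw [integral_add (hIφ k) (integrable_const _), integral_const] at h1
    simp only [measure_univ, probReal_univ, ENNReal.toReal_one, smul_eq_mul, one_mul] at h1
    rw [hφn k hk, hψn k hk] at h1
    linarith
  have hlam0 : ∀ k, lam k = 0 := by
    intro k
    by_cases hk : (k : ℕ) < J - 1
    · exact hlt k hk
    · have hkk : (k : ℕ) = J - 1 := by have := k.isLt; omega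
      have h10 := Finset.add_sum_erase _ lam (Finset.mem_univ k)
      rw [hSsum] at h10
      have hrest : (∑ m ∈ Finset.univ.erase k, lam m) = 0 := by
        refine Finset.sum_eq_zero fun m hm => ?_
        refine hlt m ?_
        have hne : m ≠ k := Finset.ne_of_mem_erase hm
        have hmval : (m : ℕ) ≠ (k : ℕ) := fun h => hne (Fin.ext h)
        have := m.isLt
        omega
      linarith
  filter_upwards [hmain j] with y hy
  rw [hy, hlam0 j, add_zero]
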